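/- With the extended data p̄, q̄, M̄ for the partial keypoint-guided problem, for every π̄ ∈ Π(p̄,q̄;M̄) one has Σ_{i=1}^m Σ_{j=1}^n M_{i,j} π̄_{i,j} = s + π̄_{m+1,n+1}; that is, the total mass of the upper-left m×n block of the masked plan M̄⊙π̄ equals s plus the mass placed on the dummy-to-dummy entry. -/
import Mathlib


open Finset

noncomputable section

variable {m n : ℕ}

/-- Mask matrix determined by the keypoint pair set `K`:
`M i j = 1` if `(i,j) ∈ K`; `M i j = 0` if `i ∈ I` or `j ∈ J` but `(i,j) ∉ K`;
`M i j = 1` otherwise. -/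
def mask (K : Finset (Fin m × Fin n)) : Matrix (Fin m) (Fin n) ℝ :=
  fun i j =>
    if (i, j) ∈ K then 1
    else if (∃ j', (i, j') ∈ K) ∨ (∃ i', (i', j) ∈ K) then 0
    else 1

/-- The masked feasible set `Π(p, q; M)`. -/
def PiM (M : Matrix (Fin m) (Fin n) ℝ) (p : Fin m → ℝ) (q : Fin n → ℝ) :
    Set (Matrix (Fin m) (Fin n) ℝ) :=
  {π | (∀ i j, 0 ≤ π i j) ∧ (∀ i, ∑ j, M i j * π i j = p i) ∧
    (∀ j, ∑ i, M i j * π i j = q j)}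

/-- Extend an `m × n` matrix by one extra column, one extra row and a corner entry. -/
def extend (B : Matrix (Fin m) (Fin n) ℝ) (col : Fin m → ℝ) (row : Fin n → ℝ)
    (corner : ℝ) : Matrix (Fin (m + 1)) (Fin (n + 1)) ℝ :=
  fun i j =>
    if hi : (i : ℕ) < m then
      if hj : (j : ℕ) < n then B ⟨i, hi⟩ ⟨j, hj⟩ else col ⟨i, hi⟩
    else if hj : (j : ℕ) < n then row ⟨j, hj⟩ else corner

/-- Extend a vector by one extra entry. -/
def extVec (v : Fin m → ℝ) (last : ℝ) : Fin (m + 1) → ℝ :=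
  fun i => if hi : (i : ℕ) < m then v ⟨i, hi⟩ else last

/-- `a i = 0` if `i ∈ I` and `1` otherwise. -/
def avec (K : Finset (Fin m × Fin n)) : Fin m → ℝ :=
  fun i => if ∃ j, (i, j) ∈ K then 0 else 1

/-- `b j = 0` if `j ∈ J` and `1` otherwise. -/
def bvec (K : Finset (Fin m × Fin n)) : Fin n → ℝ :=
  fun j => if ∃ i, (i, j) ∈ K then 0 else 1

/-- The extended mask `M̄`. -/
def Mbar (K : Finset (Fin m × Fin n)) : Matrix (Fin (m + 1)) (Fin (n + 1)) ℝ :=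
  extend (mask K) (avec K) (bvec K) 1

/-- The extended guiding matrix `Ḡ`. -/
def Gbar (G : Matrix (Fin m) (Fin n) ℝ) (ξ A : ℝ) :
    Matrix (Fin (m + 1)) (Fin (n + 1)) ℝ :=
  extend G (fun _ => ξ) (fun _ => ξ) (2 * ξ + A)

/-- The extended source weights `p̄ = (pᵀ, ‖q‖₁ − s)ᵀ`. -/
def pbar (p : Fin m → ℝ) (q : Fin n → ℝ) (s : ℝ) : Fin (m + 1) → ℝ :=
  extVec p (∑ j, q j - s)

/-- The extended target weights `q̄ = (qᵀ, ‖p‖₁ − s)ᵀ`. -/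
def qbar (p : Fin m → ℝ) (q : Fin n → ℝ) (s : ℝ) : Fin (n + 1) → ℝ :=
  extVec q (∑ i, p i - s)

/-- for every `π̄ ∈ Π(p̄, q̄; M̄)`, the total mass of the upper-left
`m × n` block of the masked plan `M̄ ⊙ π̄` equals `s` plus the mass on the
dummy-to-dummy entry. -/
theorem upper_left_block_mass
    (p : Fin m → ℝ) (q : Fin n → ℝ) (K : Finset (Fin m × Fin n)) (s : ℝ)
    (hp : ∀ i, 0 ≤ p i) (hq : ∀ j, 0 ≤ q j)
    (hK1 : ∀ a ∈ K, ∀ b ∈ K, a.1 = b.1 → a = b)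
    (hK2 : ∀ a ∈ K, ∀ b ∈ K, a.2 = b.2 → a = b)
    (hs0 : 0 ≤ s) (hs : s ≤ min (∑ i, p i) (∑ j, q j))
    (πb : Matrix (Fin (m + 1)) (Fin (n + 1)) ℝ)
    (hπb : πb ∈ PiM (Mbar K) (pbar p q s) (qbar p q s)) :
    ∑ i : Fin m, ∑ j : Fin n, mask K i j * πb i.castSucc j.castSucc
      = s + πb (Fin.last m) (Fin.last n) := by
  obtain ⟨-, hrow, hcol⟩ := hπb
  have hMcc : ∀ (i : Fin m) (j : Fin n),
      Mbar K i.castSucc j.castSucc = mask K i j := by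
    intro i j
    simp [Mbar, extend, i.isLt, j.isLt]
  have hMlc : ∀ (j : Fin n), Mbar K (Fin.last m) j.castSucc = bvec K j := by
    intro j
    simp [Mbar, extend, j.isLt]
  have hMll : Mbar K (Fin.last m) (Fin.last n) = 1 := by
    simp [Mbar, extend]
  -- row constraint at the last row
  have hlast := hrow (Fin.last m)
  rw [Fin.sum_univ_castSucc] at hlast
  simp only [hMlc, hMll, one_mul] at hlast
  have hplast : pbar p q s (Fin.last m) = ∑ j, q j - s := by
    simp [pbar, extVec]
  rw [hplast] at hlast
  -- column constraints for j < n
  have hq' : ∀ j : Fin n,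
      (∑ i : Fin m, mask K i j * πb i.castSucc j.castSucc)
        + bvec K j * πb (Fin.last m) j.castSucc = q j := by
    intro j
    have := hcol j.castSucc
    rw [Fin.sum_univ_castSucc] at this
    simp only [hMcc, hMlc] at this
    simpa [qbar, extVec, j.isLt] using this
  have hsum : ∑ j : Fin n, ((∑ i : Fin m, mask K i j * πb i.castSucc j.castSucc)
      + bvec K j * πb (Fin.last m) j.castSucc) = ∑ j, q j := by
    exact Finset.sum_congr rfl fun j _ => hq' j
  rw [Finset.sum_add_distrib] at hsum
  rw [Finset.sum_comm]
  linarith [hsum, hlast]
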